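/- Let F be a Randers metric with parameters (M, ω), ‖ω‖_{M⁻¹} < 1, and set α = 1 − ωᵀ M⁻¹ ω > 0. Then the dual metric F*(u) = max{uᵀv : F(v) ≤ 1} is again a Randers metric with parameters M* = (1/α²)(α M⁻¹ + (M⁻¹ω)(M⁻¹ω)ᵀ) and ω* = −(1/α) M⁻¹ ω, i.e., F*(u) = √(uᵀ M* u) + (ω*)ᵀ u for all u. -/

import Mathlib

open Matrix

namespace RandersAux

variable {n : ℕ}

lemma vmv_mulVec (a b x : Fin n → ℝ) :
    (vecMulVec a b).mulVec x = (b ⬝ᵥ x) • a := by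
  ext i
  simp only [mulVec, dotProduct, vecMulVec_apply, Pi.smul_apply, smul_eq_mul, Finset.mul_sum]
  rw [Finset.sum_mul]
  exact Finset.sum_congr rfl fun j _ => by ring

lemma dot_symm (A : Matrix (Fin n) (Fin n) ℝ) (hA : Aᵀ = A) (x y : Fin n → ℝ) :
    x ⬝ᵥ A.mulVec y = y ⬝ᵥ A.mulVec x := by
  have h : x ᵥ* A = A *ᵥ x := by rw [← hA, vecMul_transpose, hA]
  rw [dotProduct_mulVec, h, dotProduct_comm]

lemma cs (A : Matrix (Fin n) (Fin n) ℝ) (hA : Aᵀ = A) (h0 : ∀ z, 0 ≤ z ⬝ᵥ A.mulVec z)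
    (x y : Fin n → ℝ) :
    (x ⬝ᵥ A.mulVec y) ^ 2 ≤ (x ⬝ᵥ A.mulVec x) * (y ⬝ᵥ A.mulVec y) := by
  have hyx := dot_symm A hA y x
  have key : ∀ t : ℝ,
      0 ≤ (y ⬝ᵥ A.mulVec y) * (t * t) + (2 * (x ⬝ᵥ A.mulVec y)) * t + x ⬝ᵥ A.mulVec x := by
    intro t
    have h := h0 (x + t • y)
    simp only [mulVec_add, mulVec_smul, dotProduct_add, add_dotProduct, dotProduct_smul,
      smul_dotProduct, smul_eq_mul] at h
    rw [hyx] at h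
    nlinarith [h]
  have hd := discrim_le_zero key
  rw [discrim] at hd
  nlinarith [hd]

end RandersAux

open RandersAux

theorem dual_randers (n : ℕ) (M : Matrix (Fin n) (Fin n) ℝ) (ω : Fin n → ℝ)
    (hM : M.PosDef) (hω : ω ⬝ᵥ M⁻¹.mulVec ω < 1) :
    ∀ u : Fin n → ℝ,
      sSup ((fun v => u ⬝ᵥ v) ''
          {v : Fin n → ℝ | Real.sqrt (v ⬝ᵥ M.mulVec v) + ω ⬝ᵥ v ≤ 1}) =
        Real.sqrt (u ⬝ᵥ
            (((1 - ω ⬝ᵥ M⁻¹.mulVec ω) ^ 2)⁻¹ •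
              ((1 - ω ⬝ᵥ M⁻¹.mulVec ω) • M⁻¹ +
                vecMulVec (M⁻¹.mulVec ω) (M⁻¹.mulVec ω))).mulVec u) +
          (-(1 - ω ⬝ᵥ M⁻¹.mulVec ω)⁻¹ • M⁻¹.mulVec ω) ⬝ᵥ u := by
  intro u
  set q : Fin n → ℝ := M⁻¹.mulVec ω with hqdef
  set s : ℝ := ω ⬝ᵥ q with hsdef
  have hα : (0 : ℝ) < 1 - s := by linarith
  -- basic symmetry facts
  have hMT : Mᵀ = M := by
    have := hM.1
    rwa [Matrix.IsHermitian, conjTranspose_eq_transpose_of_trivial] at this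
  have hMinvT : M⁻¹ᵀ = M⁻¹ := by
    have := hM.inv.1
    rwa [Matrix.IsHermitian, conjTranspose_eq_transpose_of_trivial] at this
  have hMnn : ∀ v, 0 ≤ v ⬝ᵥ M.mulVec v := fun v => by simpa using hM.posSemidef.dotProduct_mulVec_nonneg v
  have hs0 : 0 ≤ s := by simpa [hsdef, hqdef] using hM.inv.posSemidef.dotProduct_mulVec_nonneg ω
  have hdet : IsUnit M.det := hM.det_pos.ne'.isUnit
  have hMq : M.mulVec q = ω := by
    rw [hqdef, mulVec_mulVec, Matrix.mul_nonsing_inv _ hdet, one_mulVec]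
  have hMinvx : ∀ x, M.mulVec (M⁻¹.mulVec x) = x := by
    intro x
    rw [mulVec_mulVec, Matrix.mul_nonsing_inv _ hdet, one_mulVec]
  have hqω : q ⬝ᵥ ω = s := by rw [hsdef, dotProduct_comm]
  -- Cauchy-Schwarz for M
  have hcsM := cs M hMT hMnn
  have homega_sq : ∀ v, (ω ⬝ᵥ v) ^ 2 ≤ s * (v ⬝ᵥ M.mulVec v) := by
    intro v
    have h1 := hcsM q v
    have h2 : q ⬝ᵥ M.mulVec q = s := by rw [hMq, hqω]
    have h3 : q ⬝ᵥ M.mulVec v = ω ⬝ᵥ v := by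
      rw [dot_symm M hMT q v, hMq, dotProduct_comm]
    rwa [h2, h3] at h1
  -- the ellipsoid matrix and its inverse
  set A : Matrix (Fin n) (Fin n) ℝ := M - vecMulVec ω ω with hAdef
  set B : Matrix (Fin n) (Fin n) ℝ := M⁻¹ + (1 - s)⁻¹ • vecMulVec q q with hBdef
  set v₀ : Fin n → ℝ := -(1 - s)⁻¹ • q with hv₀def
  have hvmvT : ∀ a : Fin n → ℝ, (vecMulVec a a)ᵀ = vecMulVec a a := by
    intro a; ext i j; simp [vecMulVec_apply, transpose_apply, mul_comm]
  have hAT : Aᵀ = A := by rw [hAdef, transpose_sub, hMT, hvmvT]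
  have hA_apply : ∀ y, A.mulVec y = M.mulVec y - (ω ⬝ᵥ y) • ω := by
    intro y; rw [hAdef, sub_mulVec, vmv_mulVec]
  have hB_apply : ∀ x, B.mulVec x = M⁻¹.mulVec x + ((1 - s)⁻¹ * (q ⬝ᵥ x)) • q := by
    intro x
    rw [hBdef, add_mulVec, smul_mulVec, vmv_mulVec, smul_smul]
  have hAz : ∀ z, z ⬝ᵥ A.mulVec z = z ⬝ᵥ M.mulVec z - (ω ⬝ᵥ z) ^ 2 := by
    intro z
    rw [hA_apply, dotProduct_sub, dotProduct_smul, smul_eq_mul, dotProduct_comm z ω]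
    ring
  have hA0 : ∀ z, 0 ≤ z ⬝ᵥ A.mulVec z := by
    intro z
    rw [hAz]
    nlinarith [homega_sq z, hMnn z]
  have hABu : ∀ x, A.mulVec (B.mulVec x) = x := by
    intro x
    rw [hB_apply, hA_apply]
    rw [mulVec_add, mulVec_smul, hMinvx, hMq]
    have hωB : ω ⬝ᵥ (M⁻¹.mulVec x + ((1 - s)⁻¹ * (q ⬝ᵥ x)) • q) =
        (q ⬝ᵥ x) + (1 - s)⁻¹ * (q ⬝ᵥ x) * s := by
      rw [dotProduct_add, dotProduct_smul, smul_eq_mul]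
      have : ω ⬝ᵥ M⁻¹.mulVec x = q ⬝ᵥ x := by
        rw [dot_symm M⁻¹ hMinvT ω x, ← hqdef, dotProduct_comm]
      rw [this, dotProduct_comm ω q, hqω]
    rw [hωB]
    have hcoef : (1 - s)⁻¹ * (q ⬝ᵥ x) = (q ⬝ᵥ x) + (1 - s)⁻¹ * (q ⬝ᵥ x) * s := by
      field_simp
      ring
    rw [← hcoef]
    simp
  -- symmetry of B
  have hBT : Bᵀ = B := by
    rw [hBdef, transpose_add, transpose_smul, hMinvT, hvmvT]
  -- t = uᵀ B u
  set t : ℝ := u ⬝ᵥ B.mulVec u with htdef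
  have hBuABu : (B.mulVec u) ⬝ᵥ A.mulVec (B.mulVec u) = t := by
    rw [hABu u, dotProduct_comm]
  have ht0 : 0 ≤ t := by rw [← hBuABu]; exact hA0 _
  have hBuAw : ∀ w, u ⬝ᵥ w = (B.mulVec u) ⬝ᵥ A.mulVec w := by
    intro w
    rw [dot_symm A hAT (B.mulVec u) w, hABu u, dotProduct_comm]
  -- center identities
  have hAv₀ : A.mulVec v₀ = -ω := by
    rw [hv₀def, hA_apply]
    rw [mulVec_smul, hMq, dotProduct_smul, smul_eq_mul, dotProduct_comm ω q, hqω]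
    have : (-(1 - s)⁻¹ * s) • ω = (-(1 - s)⁻¹ * s) • ω := rfl
    ext i
    simp only [Pi.sub_apply, Pi.smul_apply, Pi.neg_apply, smul_eq_mul, neg_smul]
    field_simp
    ring
  -- key quadratic identity
  have hid : ∀ v, (v - v₀) ⬝ᵥ A.mulVec (v - v₀) =
      v ⬝ᵥ M.mulVec v - (ω ⬝ᵥ v) ^ 2 + 2 * (ω ⬝ᵥ v) + s * (1 - s)⁻¹ := by
    intro v
    have h1 : v ⬝ᵥ A.mulVec v₀ = -(ω ⬝ᵥ v) := by
      rw [hAv₀, dotProduct_neg, dotProduct_comm]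
    have h2 : v₀ ⬝ᵥ A.mulVec v = -(ω ⬝ᵥ v) := by
      rw [dot_symm A hAT v₀ v, h1]
    have h3 : v₀ ⬝ᵥ A.mulVec v₀ = s * (1 - s)⁻¹ := by
      rw [hAv₀, dotProduct_neg, hv₀def]
      rw [neg_smul, neg_dotProduct, smul_dotProduct, smul_eq_mul, hqω]
      ring
    calc (v - v₀) ⬝ᵥ A.mulVec (v - v₀)
        = v ⬝ᵥ A.mulVec v - v ⬝ᵥ A.mulVec v₀ - (v₀ ⬝ᵥ A.mulVec v - v₀ ⬝ᵥ A.mulVec v₀) := by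
          rw [mulVec_sub, sub_dotProduct, dotProduct_sub, dotProduct_sub]
      _ = _ := by rw [hAz, h1, h2, h3]; ring
  have hconst : s * (1 - s)⁻¹ + 1 = (1 - s)⁻¹ := by field_simp; ring
  -- the ellipsoid description of the Randers ball
  have hEll : ∀ v, (Real.sqrt (v ⬝ᵥ M.mulVec v) + ω ⬝ᵥ v ≤ 1) ↔
      ((v - v₀) ⬝ᵥ A.mulVec (v - v₀) ≤ (1 - s)⁻¹) := by
    intro v
    rw [hid v]
    constructor
    · intro h
      have h1 : Real.sqrt (v ⬝ᵥ M.mulVec v) ≤ 1 - ω ⬝ᵥ v := by linarith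
      have h3 : 0 ≤ 1 - ω ⬝ᵥ v := le_trans (Real.sqrt_nonneg _) h1
      have h2 : v ⬝ᵥ M.mulVec v ≤ (1 - ω ⬝ᵥ v) ^ 2 := by
        nlinarith [Real.sq_sqrt (hMnn v), Real.sqrt_nonneg (v ⬝ᵥ M.mulVec v)]
      nlinarith [h2]
    · intro h
      have h2 : v ⬝ᵥ M.mulVec v ≤ (1 - ω ⬝ᵥ v) ^ 2 := by nlinarith
      have h3 : 0 ≤ 1 - ω ⬝ᵥ v := by
        by_contra hc
        push_neg at hc
        have h4 := homega_sq v
        nlinarith [hMnn v, mul_le_mul_of_nonneg_left h2 hs0]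
      calc Real.sqrt (v ⬝ᵥ M.mulVec v) + ω ⬝ᵥ v
          ≤ Real.sqrt ((1 - ω ⬝ᵥ v) ^ 2) + ω ⬝ᵥ v := by
            gcongr
        _ = 1 := by rw [Real.sqrt_sq h3]; ring
  -- value of the quadratic form M* at u
  have hMstar : u ⬝ᵥ (((1 - s) ^ 2)⁻¹ •
      ((1 - s) • M⁻¹ + vecMulVec q q)).mulVec u = (1 - s)⁻¹ * t := by
    have hBu : t = u ⬝ᵥ M⁻¹.mulVec u + (1 - s)⁻¹ * (q ⬝ᵥ u) ^ 2 := by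
      rw [htdef, hB_apply, dotProduct_add, dotProduct_smul, smul_eq_mul,
        dotProduct_comm u q]
      ring
    rw [smul_mulVec, add_mulVec, smul_mulVec, vmv_mulVec,
      dotProduct_smul, dotProduct_add, dotProduct_smul, dotProduct_smul,
      smul_eq_mul, smul_eq_mul, smul_eq_mul, dotProduct_comm u q, hBu]
    field_simp
  rw [hMstar]
  -- the goal is now: sSup (...) = √((1-s)⁻¹ * t) + v₀ ⬝ᵥ u
  apply IsGreatest.csSup_eq
  constructor
  · -- membership: exhibit the maximizer
    set c : ℝ := (Real.sqrt ((1 - s) * t))⁻¹ with hcdef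
    refine ⟨v₀ + c • B.mulVec u, ?_, ?_⟩
    · show Real.sqrt _ + _ ≤ 1
      rw [hEll]
      have hsub : v₀ + c • B.mulVec u - v₀ = c • B.mulVec u := by abel
      rw [hsub, mulVec_smul, dotProduct_smul, smul_dotProduct, smul_eq_mul, smul_eq_mul,
        hBuABu]
      rcases eq_or_lt_of_le ht0 with h | h
      · rw [← h, mul_zero, mul_zero]
        positivity
      · have hst : 0 < (1 - s) * t := mul_pos hα h
        have : c * (c * t) = (1 - s)⁻¹ := by
          rw [hcdef, ← mul_assoc, ← mul_inv, Real.mul_self_sqrt hst.le]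
          field_simp
        rw [this]
    · show u ⬝ᵥ (v₀ + c • B.mulVec u) = _
      have hcBu : u ⬝ᵥ (c • B.mulVec u) = c * t := by
        rw [htdef, dotProduct_smul, smul_eq_mul]
      rw [dotProduct_add, hcBu, dotProduct_comm v₀ u]
      rcases eq_or_lt_of_le ht0 with h | h
      · rw [← h, mul_zero, mul_zero, Real.sqrt_zero]
        ring
      · have hst : 0 < (1 - s) * t := mul_pos hα h
        have hct : c * t = Real.sqrt ((1 - s)⁻¹ * t) := by
          have hkey : Real.sqrt ((1 - s)⁻¹ * t) * Real.sqrt ((1 - s) * t) = t := by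
            rw [← Real.sqrt_mul (by positivity)]
            have : (1 - s)⁻¹ * t * ((1 - s) * t) = t ^ 2 := by
              field_simp
            rw [this, Real.sqrt_sq h.le]
          have hne : Real.sqrt ((1 - s) * t) ≠ 0 := by positivity
          rw [hcdef, inv_mul_eq_div, div_eq_iff hne]
          exact hkey.symm
        rw [hct]
        ring
  · -- upper bound
    rintro x ⟨v, hv, rfl⟩
    have h1 : (v - v₀) ⬝ᵥ A.mulVec (v - v₀) ≤ (1 - s)⁻¹ := (hEll v).1 hv
    have hcsA := cs A hAT hA0 (B.mulVec u) (v - v₀)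
    rw [hBuABu] at hcsA
    have h3 : u ⬝ᵥ (v - v₀) = (B.mulVec u) ⬝ᵥ A.mulVec (v - v₀) := hBuAw _
    have h4 : (u ⬝ᵥ (v - v₀)) ^ 2 ≤ t * (1 - s)⁻¹ := by
      rw [h3]
      exact le_trans hcsA (mul_le_mul_of_nonneg_left h1 ht0)
    have h5 : u ⬝ᵥ (v - v₀) ≤ Real.sqrt ((1 - s)⁻¹ * t) := by
      calc u ⬝ᵥ (v - v₀) ≤ |u ⬝ᵥ (v - v₀)| := le_abs_self _
        _ = Real.sqrt ((u ⬝ᵥ (v - v₀)) ^ 2) := (Real.sqrt_sq_eq_abs _).symm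
        _ ≤ Real.sqrt ((1 - s)⁻¹ * t) := by
            apply Real.sqrt_le_sqrt
            rw [mul_comm]
            exact h4
    have h6 : u ⬝ᵥ v = u ⬝ᵥ (v - v₀) + u ⬝ᵥ v₀ := by
      rw [dotProduct_sub]; ring
    show u ⬝ᵥ v ≤ _
    rw [h6, dotProduct_comm v₀ u]
    linarith
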